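/- For a solution of the same Lorentz equations in a dipole field, the quantity p_φ = (x y' − y x') + α (x²+y²)/r³ (with r = √(x²+y²+z²)) is constant in time. -/

import Mathlib

private lemma aux_deriv_diff (f : ℝ → ℝ) (hf : ContDiff ℝ 2 f) :
    Differentiable ℝ (deriv f) := by
  have h : ContDiff ℝ ((1:ℕ) + 1) f := by exact_mod_cast hf
  exact ((contDiff_succ_iff_deriv.mp h).2.2).differentiable (by simp)

theorem lorentz_angular_momentum_conserved
    (α : ℝ) (x y z : ℝ → ℝ)
    (hx : ContDiff ℝ 2 x) (hy : ContDiff ℝ 2 y) (hz : ContDiff ℝ 2 z)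
    (r : ℝ → ℝ) (hr : ∀ t, r t = Real.sqrt ((x t)^2 + (y t)^2 + (z t)^2))
    (hrpos : ∀ t, 0 < r t)
    (hodex : ∀ t, deriv (deriv x) t =
      3 * α * (z t) * (deriv y t * z t - deriv z t * y t) / (r t)^5
        - α * deriv y t / (r t)^3)
    (hodey : ∀ t, deriv (deriv y) t =
      -3 * α * (z t) * (deriv x t * z t - deriv z t * x t) / (r t)^5
        + α * deriv x t / (r t)^3)
    (hodez : ∀ t, deriv (deriv z) t =
      3 * α * (z t) * (deriv x t * y t - deriv y t * x t) / (r t)^5) :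
    ∀ t, deriv (fun s => x s * deriv y s - y s * deriv x s
      + α * ((x s)^2 + (y s)^2) / (r s)^3) t = 0 := by
  intro t
  have hQpos : ∀ s, 0 < (x s)^2 + (y s)^2 + (z s)^2 := by
    intro s
    have h := hrpos s
    rw [hr s, Real.sqrt_pos] at h
    exact h
  have hfun : (fun s => x s * deriv y s - y s * deriv x s
      + α * ((x s)^2 + (y s)^2) / (r s)^3)
      = (fun s => x s * deriv y s - y s * deriv x s
      + α * ((x s)^2 + (y s)^2) / (Real.sqrt ((x s)^2 + (y s)^2 + (z s)^2))^3) := by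
    funext s; rw [hr s]
  have hx' : HasDerivAt x (deriv x t) t :=
    ((hx.differentiable (by norm_num)) t).hasDerivAt
  have hy' : HasDerivAt y (deriv y t) t :=
    ((hy.differentiable (by norm_num)) t).hasDerivAt
  have hz' : HasDerivAt z (deriv z t) t :=
    ((hz.differentiable (by norm_num)) t).hasDerivAt
  have hdx : HasDerivAt (deriv x) (deriv (deriv x) t) t :=
    ((aux_deriv_diff x hx) t).hasDerivAt
  have hdy : HasDerivAt (deriv y) (deriv (deriv y) t) t :=
    ((aux_deriv_diff y hy) t).hasDerivAt
  set a := x t; set b := y t; set c := z t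
  set a' := deriv x t; set b' := deriv y t; set c' := deriv z t
  set a'' := deriv (deriv x) t; set b'' := deriv (deriv y) t
  set Q := a^2 + b^2 + c^2 with hQ
  set R := Real.sqrt Q with hRdef
  have hQt : 0 < Q := hQpos t
  have hRpos : 0 < R := Real.sqrt_pos.mpr hQt
  have hRne : R ≠ 0 := ne_of_gt hRpos
  have hR2 : R^2 = Q := Real.sq_sqrt hQt.le
  have hQd : HasDerivAt (fun s => (x s)^2 + (y s)^2 + (z s)^2)
      (2*a*a' + 2*b*b' + 2*c*c') t := by
    have h := ((hx'.pow 2).add (hy'.pow 2)).add (hz'.pow 2)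
    refine h.congr_deriv ?_
    simp only [Nat.cast_ofNat, Nat.reduceSub, pow_one]
    rfl
  have hsq : HasDerivAt (fun s => Real.sqrt ((x s)^2 + (y s)^2 + (z s)^2))
      ((2*a*a' + 2*b*b' + 2*c*c') / (2*R)) t := hQd.sqrt (ne_of_gt hQt)
  have hcube : HasDerivAt (fun s => (Real.sqrt ((x s)^2 + (y s)^2 + (z s)^2))^3)
      (3 * R^2 * ((2*a*a' + 2*b*b' + 2*c*c') / (2*R))) t := by
    have h := hsq.pow 3
    refine h.congr_deriv ?_
    simp only [Nat.cast_ofNat, Nat.reduceSub]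
    rfl
  have hN : HasDerivAt (fun s => α * ((x s)^2 + (y s)^2))
      (α * (2*a*a' + 2*b*b')) t := by
    have h := (HasDerivAt.const_mul α ((hx'.pow 2).add (hy'.pow 2)))
    refine h.congr_deriv ?_
    simp only [Nat.cast_ofNat, Nat.reduceSub, pow_one]
    rfl
  have hcubene : (R:ℝ)^3 ≠ 0 := pow_ne_zero 3 hRne
  have hdiv : HasDerivAt (fun s => α * ((x s)^2 + (y s)^2)
      / (Real.sqrt ((x s)^2 + (y s)^2 + (z s)^2))^3)
      ((α * (2*a*a' + 2*b*b') * R^3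
        - α * (a^2 + b^2) * (3 * R^2 * ((2*a*a' + 2*b*b' + 2*c*c') / (2*R))))
        / (R^3)^2) t := hN.div hcube hcubene
  have hfirst : HasDerivAt (fun s => x s * deriv y s - y s * deriv x s)
      ((a' * b' + a * b'') - (b' * a' + b * a'')) t :=
    (hx'.mul hdy).sub (hy'.mul hdx)
  have htotal := (hfirst.add hdiv).deriv
  rw [hfun]
  erw [htotal]
  have hRr : Real.sqrt ((x t)^2 + (y t)^2 + (z t)^2) = R := rfl
  have ha'' : a'' = 3 * α * c * (b' * c - c' * b) / R^5 - α * b' / R^3 := by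
    have h := hodex t
    rw [hr t, hRr] at h
    exact h
  have hb'' : b'' = -3 * α * c * (a' * c - c' * a) / R^5 + α * a' / R^3 := by
    have h := hodey t
    rw [hr t, hRr] at h
    exact h
  rw [ha'', hb'']
  have hc2 : c^2 = R^2 - a^2 - b^2 := by rw [hR2]; ring
  field_simp
  linear_combination (-3*α*(a*a'+b*b')) * hc2
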